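/- Let ε > 0 and let u : ℝ → ℝ be four times continuously differentiable on [0,1] with u(0) = u''(0) = u(1) = u'(1) = 0. Set g(x) = u'''(x) + u(x)·u'(x) + ε·u''''(x) and h(x) = −u'(0) + (1/2)∫₀¹ u(ξ)² dξ − (1/2)·u(x)² + ∫₀¹ ξ·g(ξ) dξ − ∫ₓ¹ g(ξ) dξ. Then ∫₀¹ (u''(x))² dx + (ε/2)·(u''(1))² ≤ 8ε·(u'(0))² + ∫₀¹ (h(x))² dx. -/

import Mathlib

open Set intervalIntegral

private lemma ftc_Icc (f f' : ℝ → ℝ)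
    (hd : ∀ x ∈ Set.Icc (0:ℝ) 1, HasDerivWithinAt f (f' x) (Set.Icc (0:ℝ) 1) x)
    (hc : ContinuousOn f' (Set.Icc (0:ℝ) 1)) {a b : ℝ} (ha : a ∈ Set.Icc (0:ℝ) 1)
    (hb : b ∈ Set.Icc (0:ℝ) 1) (hab : a ≤ b) :
    ∫ x in a..b, f' x = f b - f a := by
  have hsub : Set.Icc a b ⊆ Set.Icc (0:ℝ) 1 := Set.Icc_subset_Icc ha.1 hb.2
  refine intervalIntegral.integral_eq_sub_of_hasDeriv_right_of_le hab
    (fun x hx => ((hd x (hsub hx)).continuousWithinAt).mono hsub) (fun x hx => ?_)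
    ((hc.mono hsub).intervalIntegrable_of_Icc hab)
  exact (hd x (hsub (Set.Ioo_subset_Icc_self hx))).mono_of_mem_nhdsWithin
    (Icc_mem_nhdsGT_of_mem ⟨(hsub (Set.Ioo_subset_Icc_self hx)).1, lt_of_lt_of_le hx.2 hb.2⟩)

/-- Final inequality of Estimate VII of the paper: the `L²(0,1)` bound for `u''` in terms
of `h` and `u'(0)`. Here `u₁, u₂, u₃, u₄` are the first four derivatives of `u` on `[0,1]`. -/
theorem estimateVII_final_inequality (ε : ℝ) (hε : 0 < ε) (u u₁ u₂ u₃ u₄ : ℝ → ℝ)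
    (hd1 : ∀ x ∈ Set.Icc (0 : ℝ) 1, HasDerivWithinAt u (u₁ x) (Set.Icc (0 : ℝ) 1) x)
    (hd2 : ∀ x ∈ Set.Icc (0 : ℝ) 1, HasDerivWithinAt u₁ (u₂ x) (Set.Icc (0 : ℝ) 1) x)
    (hd3 : ∀ x ∈ Set.Icc (0 : ℝ) 1, HasDerivWithinAt u₂ (u₃ x) (Set.Icc (0 : ℝ) 1) x)
    (hd4 : ∀ x ∈ Set.Icc (0 : ℝ) 1, HasDerivWithinAt u₃ (u₄ x) (Set.Icc (0 : ℝ) 1) x)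
    (hc : ContinuousOn u₄ (Set.Icc (0 : ℝ) 1))
    (hu0 : u 0 = 0) (hu2 : u₂ 0 = 0) (hu1 : u 1 = 0) (hux1 : u₁ 1 = 0)
    (g : ℝ → ℝ) (hg : ∀ x, g x = u₃ x + u x * u₁ x + ε * u₄ x)
    (h : ℝ → ℝ)
    (hh : ∀ x, h x = -u₁ 0 + (1 / 2) * (∫ ξ in (0 : ℝ)..1, (u ξ) ^ 2) -
      (1 / 2) * (u x) ^ 2 + (∫ ξ in (0 : ℝ)..1, ξ * g ξ) - ∫ ξ in x..1, g ξ) :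
    (∫ x in (0 : ℝ)..1, (u₂ x) ^ 2) + (ε / 2) * (u₂ 1) ^ 2 ≤
      8 * ε * (u₁ 0) ^ 2 + ∫ x in (0 : ℝ)..1, (h x) ^ 2 := by
  have h01 : (0:ℝ) ∈ Set.Icc (0:ℝ) 1 := by norm_num
  have h11 : (1:ℝ) ∈ Set.Icc (0:ℝ) 1 := by norm_num
  -- continuity
  have cu : ContinuousOn u (Set.Icc (0:ℝ) 1) := fun x hx => (hd1 x hx).continuousWithinAt
  have cu1 : ContinuousOn u₁ (Set.Icc (0:ℝ) 1) := fun x hx => (hd2 x hx).continuousWithinAt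
  have cu2 : ContinuousOn u₂ (Set.Icc (0:ℝ) 1) := fun x hx => (hd3 x hx).continuousWithinAt
  have cu3 : ContinuousOn u₃ (Set.Icc (0:ℝ) 1) := fun x hx => (hd4 x hx).continuousWithinAt
  have cg : ContinuousOn g (Set.Icc (0:ℝ) 1) := by
    have : ContinuousOn (fun x => u₃ x + u x * u₁ x + ε * u₄ x) (Set.Icc (0:ℝ) 1) :=
      (cu3.add (cu.mul cu1)).add (continuousOn_const.mul hc)
    exact this.congr fun x _ => hg x
  -- the antiderivative of g
  set G : ℝ → ℝ := fun x => u₂ x + (1/2) * (u x * u x) + ε * u₃ x with hGdef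
  have hdG : ∀ x ∈ Set.Icc (0:ℝ) 1, HasDerivWithinAt G (g x) (Set.Icc (0:ℝ) 1) x := by
    intro x hx
    have : HasDerivWithinAt G
        (u₃ x + (1/2) * (u₁ x * u x + u x * u₁ x) + ε * u₄ x) (Set.Icc (0:ℝ) 1) x :=
      ((hd3 x hx).add (((hd1 x hx).mul (hd1 x hx)).const_mul (1/2))).add
        ((hd4 x hx).const_mul ε)
    convert this using 1
    rw [hg]; ring
  have cG : ContinuousOn G (Set.Icc (0:ℝ) 1) :=
    (cu2.add ((continuousOn_const.mul (cu.mul cu)))).add (continuousOn_const.mul cu3)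
  -- basic integrals
  have c2 : ∫ x in (0:ℝ)..1, u₂ x = -u₁ 0 := by
    rw [ftc_Icc u₁ u₂ hd2 cu2 h01 h11 zero_le_one, hux1]; ring
  have c3 : ∫ x in (0:ℝ)..1, u₃ x = u₂ 1 := by
    rw [ftc_Icc u₂ u₃ hd3 cu3 h01 h11 zero_le_one, hu2]; ring
  have c7 : ∫ x in (0:ℝ)..1, u₂ x * u₃ x = (1/2) * (u₂ 1)^2 := by
    have hd' : ∀ x ∈ Set.Icc (0:ℝ) 1, HasDerivWithinAt (fun x => (1/2) * (u₂ x * u₂ x))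
        (u₂ x * u₃ x) (Set.Icc (0:ℝ) 1) x := by
      intro x hx
      have := ((hd3 x hx).mul (hd3 x hx)).const_mul (1/2)
      exact this.congr_deriv (by ring)
    rw [ftc_Icc _ _ hd' (cu2.mul cu3) h01 h11 zero_le_one, hu2]; ring
  -- ∫ G
  have iu2 : IntervalIntegrable u₂ MeasureTheory.volume 0 1 :=
    cu2.intervalIntegrable_of_Icc zero_le_one
  have iuu : IntervalIntegrable (fun x => (1/2) * (u x * u x)) MeasureTheory.volume 0 1 :=
    (continuousOn_const.mul (cu.mul cu)).intervalIntegrable_of_Icc zero_le_one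
  have iu3 : IntervalIntegrable (fun x => ε * u₃ x) MeasureTheory.volume 0 1 :=
    (continuousOn_const.mul cu3).intervalIntegrable_of_Icc zero_le_one
  have c6 : ∫ x in (0:ℝ)..1, G x = -u₁ 0 + (1/2) * (∫ x in (0:ℝ)..1, (u x)^2) + ε * u₂ 1 := by
    have e1 : ∫ x in (0:ℝ)..1, ((u₂ x + (1/2) * (u x * u x)) + ε * u₃ x) =
        ((∫ x in (0:ℝ)..1, u₂ x) + ∫ x in (0:ℝ)..1, (1/2) * (u x * u x)) +
          ∫ x in (0:ℝ)..1, ε * u₃ x := by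
      rw [intervalIntegral.integral_add (iu2.add iuu) iu3, intervalIntegral.integral_add iu2 iuu]
    have e2 : ∫ x in (0:ℝ)..1, u x * u x = ∫ x in (0:ℝ)..1, (u x)^2 := by
      apply intervalIntegral.integral_congr; intro x _; ring
    calc ∫ x in (0:ℝ)..1, G x
        = ((∫ x in (0:ℝ)..1, u₂ x) + ∫ x in (0:ℝ)..1, (1/2) * (u x * u x)) +
            ∫ x in (0:ℝ)..1, ε * u₃ x := e1
      _ = -u₁ 0 + (1/2) * (∫ x in (0:ℝ)..1, (u x)^2) + ε * u₂ 1 := by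
          rw [c2, intervalIntegral.integral_const_mul, intervalIntegral.integral_const_mul,
            c3, e2]
  -- ∫ ξ g ξ
  have c5 : ∫ x in (0:ℝ)..1, (G x + x * g x) = G 1 := by
    have hd' : ∀ x ∈ Set.Icc (0:ℝ) 1, HasDerivWithinAt (fun x => x * G x)
        (G x + x * g x) (Set.Icc (0:ℝ) 1) x := by
      intro x hx
      have := (hasDerivWithinAt_id x (Set.Icc (0:ℝ) 1)).mul (hdG x hx)
      exact this.congr_deriv (by simp only [id_eq]; ring)
    rw [ftc_Icc _ _ hd' (cG.add ((continuousOn_id).mul cg)) h01 h11 zero_le_one]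
    simp
  have cA : ∫ x in (0:ℝ)..1, x * g x =
      G 1 - (-u₁ 0 + (1/2) * (∫ x in (0:ℝ)..1, (u x)^2) + ε * u₂ 1) := by
    have iG : IntervalIntegrable G MeasureTheory.volume 0 1 :=
      cG.intervalIntegrable_of_Icc zero_le_one
    have ixg : IntervalIntegrable (fun x => x * g x) MeasureTheory.volume 0 1 :=
      ((continuousOn_id).mul cg).intervalIntegrable_of_Icc zero_le_one
    have e := intervalIntegral.integral_add iG ixg
    rw [c5] at e
    rw [← c6]
    linarith
  -- ∫ₓ¹ g
  have cB : ∀ x ∈ Set.Icc (0:ℝ) 1, (∫ ξ in x..1, g ξ) = G 1 - G x := fun x hx =>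
    ftc_Icc G g hdG cg hx h11 hx.2
  -- h = φ on Icc
  set φ : ℝ → ℝ := fun x => u₂ x + ε * u₃ x - ε * u₂ 1 with hφdef
  have hφ : ∀ x ∈ Set.Icc (0:ℝ) 1, h x = φ x := by
    intro x hx
    rw [hh, cA, cB x hx, hφdef]
    simp only [hGdef]
    rw [hu1]; ring
  have cφ : ContinuousOn φ (Set.Icc (0:ℝ) 1) :=
    (cu2.add (continuousOn_const.mul cu3)).sub continuousOn_const
  -- replace h by φ in the goal
  have hcong : ∫ x in (0:ℝ)..1, (h x)^2 = ∫ x in (0:ℝ)..1, (φ x)^2 := by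
    apply intervalIntegral.integral_congr
    intro x hx
    show h x ^ 2 = φ x ^ 2
    rw [hφ x (by rwa [Set.uIcc_of_le zero_le_one] at hx)]
  rw [hcong]
  -- integrability of the squares
  have iφ2 : IntervalIntegrable (fun x => (φ x)^2) MeasureTheory.volume 0 1 :=
    (cφ.pow 2).intervalIntegrable_of_Icc zero_le_one
  have iu22 : IntervalIntegrable (fun x => (u₂ x)^2) MeasureTheory.volume 0 1 :=
    (cu2.pow 2).intervalIntegrable_of_Icc zero_le_one
  have iφu2 : IntervalIntegrable (fun x => φ x * u₂ x) MeasureTheory.volume 0 1 :=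
    (cφ.mul cu2).intervalIntegrable_of_Icc zero_le_one
  -- ∫ u₂ φ
  have cC : ∫ x in (0:ℝ)..1, φ x * u₂ x =
      (∫ x in (0:ℝ)..1, (u₂ x)^2) + (ε/2) * (u₂ 1)^2 + ε * u₂ 1 * u₁ 0 := by
    have e1 : ∫ x in (0:ℝ)..1, φ x * u₂ x =
        ∫ x in (0:ℝ)..1, ((u₂ x)^2 + ε * (u₂ x * u₃ x) - (ε * u₂ 1) * u₂ x) := by
      apply intervalIntegral.integral_congr
      intro x _
      simp only [hφdef]; ring
    have iA : IntervalIntegrable (fun x => (u₂ x)^2 + ε * (u₂ x * u₃ x))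
        MeasureTheory.volume 0 1 :=
      ((cu2.pow 2).add (continuousOn_const.mul (cu2.mul cu3))).intervalIntegrable_of_Icc
        zero_le_one
    have iB : IntervalIntegrable (fun x => (ε * u₂ 1) * u₂ x) MeasureTheory.volume 0 1 :=
      (continuousOn_const.mul cu2).intervalIntegrable_of_Icc zero_le_one
    have ie : IntervalIntegrable (fun x => ε * (u₂ x * u₃ x)) MeasureTheory.volume 0 1 :=
      (continuousOn_const.mul (cu2.mul cu3)).intervalIntegrable_of_Icc zero_le_one
    rw [e1, intervalIntegral.integral_sub iA iB, intervalIntegral.integral_add iu22 ie,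
      intervalIntegral.integral_const_mul, intervalIntegral.integral_const_mul, c2, c7]
    ring
  -- ∫ (φ - u₂)² ≥ 0
  have key : 0 ≤ (∫ x in (0:ℝ)..1, (φ x)^2) - 2 * (∫ x in (0:ℝ)..1, φ x * u₂ x) +
      ∫ x in (0:ℝ)..1, (u₂ x)^2 := by
    have e1 : (∫ x in (0:ℝ)..1, (φ x)^2) - 2 * (∫ x in (0:ℝ)..1, φ x * u₂ x) +
        (∫ x in (0:ℝ)..1, (u₂ x)^2) = ∫ x in (0:ℝ)..1, (φ x - u₂ x)^2 := by
      have : ∀ x : ℝ, (φ x - u₂ x)^2 = (φ x)^2 - 2 * (φ x * u₂ x) + (u₂ x)^2 := by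
        intro x; ring
      simp only [this]
      rw [intervalIntegral.integral_add ((iφ2.sub (iφu2.const_mul 2))) iu22,
        intervalIntegral.integral_sub iφ2 (iφu2.const_mul 2),
        intervalIntegral.integral_const_mul]
    rw [e1]
    apply intervalIntegral.integral_nonneg zero_le_one
    intro x _
    positivity
  rw [cC] at key
  nlinarith [sq_nonneg (u₂ 1 + 2 * u₁ 0), hε.le, sq_nonneg (u₂ 1), sq_nonneg (u₁ 0)]
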